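/- arXiv:2303.04182 — 2 statements merged into one kernel-verified Lean document; each statement's English description precedes it below -/
import Mathlib

section
/- Let u₁, u₂ be twice continuously differentiable functions on an open set Ω ⊆ ℝⁿ with u₂ > 0 on Ω, let A : Ω → ℝ^{n×n} be a C¹ symmetric matrix field, and let f₁, f₂ : Ω → ℝⁿ be C¹ vector fields. Suppose div(A∇u₁) = div(f₁) and div(A∇u₂) = div(f₂) on Ω. Then the ratio w = u₁/u₂ satisfies div(u₂² A ∇w) = div(u₂ f₁ − u₁ f₂) + (f₂ · ∇u₁ − f₁ · ∇u₂) on Ω. -/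
/-- Partial derivative in the `i`-th coordinate direction. -/
noncomputable def pd {n : ℕ} (i : Fin n) (f : EuclideanSpace ℝ (Fin n) → ℝ)
    (x : EuclideanSpace ℝ (Fin n)) : ℝ :=
  fderiv ℝ f x (EuclideanSpace.single i 1)

private lemma pd_congr_nhds {n : ℕ} {f g : EuclideanSpace ℝ (Fin n) → ℝ}
    {x : EuclideanSpace ℝ (Fin n)} (i : Fin n)
    (h : f =ᶠ[nhds x] g) : pd i f x = pd i g x := by
  unfold pd; rw [h.fderiv_eq]

private lemma pd_mul {n : ℕ} {c d : EuclideanSpace ℝ (Fin n) → ℝ}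
    {x : EuclideanSpace ℝ (Fin n)} (i : Fin n)
    (hc : DifferentiableAt ℝ c x) (hd : DifferentiableAt ℝ d x) :
    pd i (fun y => c y * d y) x = c x * pd i d x + d x * pd i c x := by
  unfold pd; rw [fderiv_fun_mul hc hd]; simp

private lemma pd_sub {n : ℕ} {c d : EuclideanSpace ℝ (Fin n) → ℝ}
    {x : EuclideanSpace ℝ (Fin n)} (i : Fin n)
    (hc : DifferentiableAt ℝ c x) (hd : DifferentiableAt ℝ d x) :
    pd i (fun y => c y - d y) x = pd i c x - pd i d x := by
  unfold pd; rw [fderiv_fun_sub hc hd]; simp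

private lemma pd_contDiffOn {n : ℕ} {Ω : Set (EuclideanSpace ℝ (Fin n))} (hΩ : IsOpen Ω)
    {u : EuclideanSpace ℝ (Fin n) → ℝ} (hu : ContDiffOn ℝ 2 u Ω) (j : Fin n) :
    ContDiffOn ℝ 1 (pd j u) Ω := by
  have h1 : ContDiffOn ℝ 1 (fderiv ℝ u) Ω := hu.fderiv_of_isOpen hΩ (by norm_num)
  exact (ContinuousLinearMap.apply ℝ ℝ (EuclideanSpace.single j (1:ℝ))).contDiff.comp_contDiffOn h1

/-- ratio lemma.  If `div(A∇u₁) = div f₁` and `div(A∇u₂) = div f₂` on an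
open set `Ω` with `A` symmetric and `u₂ > 0`, then `w = u₁/u₂` satisfies
`div(u₂² A ∇w) = div(u₂ f₁ − u₁ f₂) + (f₂·∇u₁ − f₁·∇u₂)` on `Ω`. -/
theorem ratio_lemma {n : ℕ} (Ω : Set (EuclideanSpace ℝ (Fin n))) (hΩ : IsOpen Ω)
    (u₁ u₂ : EuclideanSpace ℝ (Fin n) → ℝ)
    (A : EuclideanSpace ℝ (Fin n) → Fin n → Fin n → ℝ)
    (f₁ f₂ : EuclideanSpace ℝ (Fin n) → Fin n → ℝ)
    (hu₁ : ContDiffOn ℝ 2 u₁ Ω) (hu₂ : ContDiffOn ℝ 2 u₂ Ω)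
    (hpos : ∀ x ∈ Ω, 0 < u₂ x)
    (hA : ∀ i j, ContDiffOn ℝ 1 (fun x => A x i j) Ω)
    (hsym : ∀ x ∈ Ω, ∀ i j, A x i j = A x j i)
    (hf₁ : ∀ i, ContDiffOn ℝ 1 (fun x => f₁ x i) Ω)
    (hf₂ : ∀ i, ContDiffOn ℝ 1 (fun x => f₂ x i) Ω)
    (heq₁ : ∀ x ∈ Ω,
      ∑ i, pd i (fun y => ∑ j, A y i j * pd j u₁ y) x = ∑ i, pd i (fun y => f₁ y i) x)
    (heq₂ : ∀ x ∈ Ω,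
      ∑ i, pd i (fun y => ∑ j, A y i j * pd j u₂ y) x = ∑ i, pd i (fun y => f₂ y i) x) :
    ∀ x ∈ Ω,
      ∑ i, pd i (fun y => (u₂ y) ^ 2 * ∑ j, A y i j * pd j (fun z => u₁ z / u₂ z) y) x
        = ∑ i, pd i (fun y => u₂ y * f₁ y i - u₁ y * f₂ y i) x
          + ((∑ i, f₂ x i * pd i u₁ x) - ∑ i, f₁ x i * pd i u₂ x) := by
  intro x hx
  set w : EuclideanSpace ℝ (Fin n) → ℝ := fun z => u₁ z / u₂ z with hwdef
  have hne : ∀ y ∈ Ω, u₂ y ≠ 0 := fun y hy => (hpos y hy).ne'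
  have hu₁' : ∀ y ∈ Ω, DifferentiableAt ℝ u₁ y := fun y hy =>
    ((hu₁.differentiableOn (by norm_num)).differentiableAt (hΩ.mem_nhds hy))
  have hu₂' : ∀ y ∈ Ω, DifferentiableAt ℝ u₂ y := fun y hy =>
    ((hu₂.differentiableOn (by norm_num)).differentiableAt (hΩ.mem_nhds hy))
  have hA' : ∀ i j, ∀ y ∈ Ω, DifferentiableAt ℝ (fun z => A z i j) y := fun i j y hy =>
    (((hA i j).differentiableOn one_ne_zero).differentiableAt (hΩ.mem_nhds hy))
  have hp₁ : ∀ j, ∀ y ∈ Ω, DifferentiableAt ℝ (pd j u₁) y := fun j y hy =>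
    (((pd_contDiffOn hΩ hu₁ j).differentiableOn one_ne_zero).differentiableAt (hΩ.mem_nhds hy))
  have hp₂ : ∀ j, ∀ y ∈ Ω, DifferentiableAt ℝ (pd j u₂) y := fun j y hy =>
    (((pd_contDiffOn hΩ hu₂ j).differentiableOn one_ne_zero).differentiableAt (hΩ.mem_nhds hy))
  have hf₁' : ∀ i, ∀ y ∈ Ω, DifferentiableAt ℝ (fun z => f₁ z i) y := fun i y hy =>
    (((hf₁ i).differentiableOn one_ne_zero).differentiableAt (hΩ.mem_nhds hy))
  have hf₂' : ∀ i, ∀ y ∈ Ω, DifferentiableAt ℝ (fun z => f₂ z i) y := fun i y hy =>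
    (((hf₂ i).differentiableOn one_ne_zero).differentiableAt (hΩ.mem_nhds hy))
  -- quotient rule consequence
  have hquot : ∀ y ∈ Ω, ∀ j, u₂ y ^ 2 * pd j w y = u₂ y * pd j u₁ y - u₁ y * pd j u₂ y := by
    intro y hy j
    have hwd : DifferentiableAt ℝ w y := by
      simp only [hwdef, div_eq_mul_inv]
      exact (hu₁' y hy).mul ((hu₂' y hy).inv (hne y hy))
    have h1 : pd j u₁ y = pd j (fun z => w z * u₂ z) y := by
      apply pd_congr_nhds
      filter_upwards [hΩ.mem_nhds hy] with z hz
      simp only [hwdef]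
      rw [div_mul_eq_mul_div, mul_div_assoc, div_self (hne z hz), mul_one]
    rw [pd_mul j hwd (hu₂' y hy)] at h1
    have h2 : w y = u₁ y / u₂ y := rfl
    have hne' := hne y hy
    rw [h1, h2]
    field_simp
    ring
  -- step A : function identity on Ω
  have hstepA : ∀ i, ∀ y ∈ Ω, u₂ y ^ 2 * ∑ j, A y i j * pd j w y =
      u₂ y * ∑ j, A y i j * pd j u₁ y - u₁ y * ∑ j, A y i j * pd j u₂ y := by
    intro i y hy
    rw [Finset.mul_sum, Finset.mul_sum, Finset.mul_sum, ← Finset.sum_sub_distrib]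
    refine Finset.sum_congr rfl fun j _ => ?_
    linear_combination A y i j * hquot y hy j
  -- each LHS summand
  have hLi : ∀ i, pd i (fun y => u₂ y ^ 2 * ∑ j, A y i j * pd j w y) x
      = (u₂ x * pd i (fun y => ∑ j, A y i j * pd j u₁ y) x
          + (∑ j, A x i j * pd j u₁ x) * pd i u₂ x)
        - (u₁ x * pd i (fun y => ∑ j, A y i j * pd j u₂ y) x
          + (∑ j, A x i j * pd j u₂ x) * pd i u₁ x) := by
    intro i
    have dg : DifferentiableAt ℝ (fun y => ∑ j, A y i j * pd j u₁ y) x :=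
      DifferentiableAt.fun_sum fun j _ => (hA' i j x hx).mul (hp₁ j x hx)
    have dh : DifferentiableAt ℝ (fun y => ∑ j, A y i j * pd j u₂ y) x :=
      DifferentiableAt.fun_sum fun j _ => (hA' i j x hx).mul (hp₂ j x hx)
    have hev : (fun y => u₂ y ^ 2 * ∑ j, A y i j * pd j w y)
        =ᶠ[nhds x] (fun y => u₂ y * (∑ j, A y i j * pd j u₁ y)
          - u₁ y * (∑ j, A y i j * pd j u₂ y)) := by
      filter_upwards [hΩ.mem_nhds hx] with y hy
      exact hstepA i y hy
    rw [pd_congr_nhds i hev,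
        pd_sub i ((hu₂' x hx).fun_mul dg) ((hu₁' x hx).fun_mul dh),
        pd_mul i (hu₂' x hx) dg, pd_mul i (hu₁' x hx) dh]
  -- each RHS summand
  have hRi : ∀ i, pd i (fun y => u₂ y * f₁ y i - u₁ y * f₂ y i) x
      = (u₂ x * pd i (fun y => f₁ y i) x + f₁ x i * pd i u₂ x)
        - (u₁ x * pd i (fun y => f₂ y i) x + f₂ x i * pd i u₁ x) := by
    intro i
    rw [pd_sub i ((hu₂' x hx).fun_mul (hf₁' i x hx)) ((hu₁' x hx).fun_mul (hf₂' i x hx)),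
        pd_mul i (hu₂' x hx) (hf₁' i x hx), pd_mul i (hu₁' x hx) (hf₂' i x hx)]
  -- cancellation by symmetry
  have hcanc : ∑ i, (∑ j, A x i j * pd j u₁ x) * pd i u₂ x
      = ∑ i, (∑ j, A x i j * pd j u₂ x) * pd i u₁ x := by
    simp_rw [Finset.sum_mul]
    rw [Finset.sum_comm]
    refine Finset.sum_congr rfl fun i _ => Finset.sum_congr rfl fun j _ => ?_
    rw [hsym x hx j i]
    ring
  have hL : ∑ i, pd i (fun y => u₂ y ^ 2 * ∑ j, A y i j * pd j w y) x
      = u₂ x * ∑ i, pd i (fun y => ∑ j, A y i j * pd j u₁ y) x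
        - u₁ x * ∑ i, pd i (fun y => ∑ j, A y i j * pd j u₂ y) x := by
    rw [Finset.sum_congr rfl fun i _ => hLi i, Finset.sum_sub_distrib,
        Finset.sum_add_distrib, Finset.sum_add_distrib, ← Finset.mul_sum, ← Finset.mul_sum,
        hcanc]
    ring
  have hR : ∑ i, pd i (fun y => u₂ y * f₁ y i - u₁ y * f₂ y i) x
      = u₂ x * ∑ i, pd i (fun y => f₁ y i) x - u₁ x * ∑ i, pd i (fun y => f₂ y i) x
        + ((∑ i, f₁ x i * pd i u₂ x) - ∑ i, f₂ x i * pd i u₁ x) := by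
    rw [Finset.sum_congr rfl fun i _ => hRi i, Finset.sum_sub_distrib,
        Finset.sum_add_distrib, Finset.sum_add_distrib, ← Finset.mul_sum, ← Finset.mul_sum]
    ring
  rw [hL, hR, heq₁ x hx, heq₂ x hx]
  ring
end

section
/- Let g be a formal power series with nonnegative coefficients and g(0) > 0, let C > 0, and consider the formal power series identity F(t) = C·(Ω(t) + g(t))/(1 − t − (A(t) − A(0))), where A is a power series with nonnegative coefficients and A(0) ≥ 0. If Ω is a power series with nonnegative coefficients satisfying Ω' ≪ F coefficientwise, and y solves the analytic ODE y'(t) = C(y(t)+g(t))/(1 − t − (A(t) − A(0))) with y(0) = Ω(0), where g and A are convergent near 0 and 1 − t − (A(t)−A(0)) is positive near t = 0, then Ω ≪ y as formal power series; in particular Ω has a positive radius of convergence. -/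
open PowerSeries

/-- Majorization of formal power series: `f ≪ g` iff `|aₙ| ≤ bₙ` for every `n`. -/
def Majorizes (f g : PowerSeries ℝ) : Prop :=
  ∀ n : ℕ, |PowerSeries.coeff n f| ≤ PowerSeries.coeff n g

/-- The formal derivative of a power series. -/
noncomputable def psDeriv (f : PowerSeries ℝ) : PowerSeries ℝ :=
  PowerSeries.mk fun n => (n + 1 : ℝ) * PowerSeries.coeff (n + 1) f

/-- The right-hand side `C·(Ω + g)/(1 − t − (A(t) − A(0)))` of the majorant ODE,
as a formal power series. -/
noncomputable def odeRHS (c : ℝ) (g A Ω : PowerSeries ℝ) : PowerSeries ℝ :=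
  PowerSeries.C c * ((Ω + g) *
    (1 - PowerSeries.X - (A - PowerSeries.C (PowerSeries.constantCoeff A)))⁻¹)

/-- Geometric sums with ratio `≥ 2` are dominated by twice the top term. -/
lemma geo_aux {a : ℝ} (ha : 2 ≤ a) : ∀ m : ℕ, ∑ j ∈ Finset.range (m + 1), a ^ j ≤ 2 * a ^ m := by
  intro m
  induction m with
  | zero => simp
  | succ m ih =>
    rw [Finset.sum_range_succ]
    have h1 : (0:ℝ) ≤ a ^ m := by positivity
    have h2 : 2 * a ^ m ≤ a ^ (m + 1) := by
      rw [pow_succ]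
      calc 2 * a ^ m = a ^ m * 2 := by ring
        _ ≤ a ^ m * a := mul_le_mul_of_nonneg_left ha h1
    linarith

/-- From summability of `aₙ rⁿ` with nonnegative terms, a geometric bound `aₙ ≤ K qⁿ`. -/
lemma geom_bound_of_summable {f : ℕ → ℝ} (hf : ∀ n, 0 ≤ f n) {r : ℝ} (hr : 0 < r)
    (hs : Summable fun n : ℕ => f n * r ^ n) :
    ∃ K, 0 ≤ K ∧ ∀ n, f n ≤ K * (r⁻¹) ^ n := by
  refine ⟨∑' n, f n * r ^ n,
    tsum_nonneg fun n => mul_nonneg (hf n) (pow_nonneg hr.le n), fun n => ?_⟩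
  have h := hs.le_tsum n (fun j _ => mul_nonneg (hf j) (pow_nonneg hr.le j))
  have hrn : (0:ℝ) < r ^ n := pow_pos hr n
  rw [inv_pow, ← div_eq_mul_inv, le_div_iff₀ hrn]
  exact h

/-- majorization by the solution of an analytic ODE.  If `Ω` has nonnegative
coefficients and `Ω' ≪ C(Ω+g)/(1 − t − (A−A(0)))` coefficientwise, where `g, A` have
nonnegative coefficients, `g(0) > 0`, `C > 0`, and `g, A` are convergent near `0`, and `Y`
is the (analytic) solution of the corresponding ODE with `Y(0) = Ω(0)`, then `Ω ≪ Y`; in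
particular `Ω` has a positive radius of convergence. -/
theorem majorant_ode (c : ℝ) (hc : 0 < c) (g A Ω Y : PowerSeries ℝ)
    (hg : ∀ n : ℕ, 0 ≤ PowerSeries.coeff n g)
    (hg0 : 0 < PowerSeries.constantCoeff g)
    (hA : ∀ n : ℕ, 0 ≤ PowerSeries.coeff n A)
    (hΩ : ∀ n : ℕ, 0 ≤ PowerSeries.coeff n Ω)
    (hmaj : Majorizes (psDeriv Ω) (odeRHS c g A Ω))
    (hgconv : ∃ r > (0 : ℝ), Summable fun n : ℕ => PowerSeries.coeff n g * r ^ n)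
    (hAconv : ∃ r > (0 : ℝ), Summable fun n : ℕ => PowerSeries.coeff n A * r ^ n)
    (hYode : psDeriv Y = odeRHS c g A Y)
    (hY0 : PowerSeries.constantCoeff Y = PowerSeries.constantCoeff Ω) :
    Majorizes Ω Y ∧
      ∃ r > (0 : ℝ), Summable fun n : ℕ => |PowerSeries.coeff n Ω| * r ^ n := by
  classical
  set u : PowerSeries ℝ :=
    1 - PowerSeries.X - (A - PowerSeries.C (PowerSeries.constantCoeff A)) with hu
  set B : PowerSeries ℝ := u⁻¹ with hBdef
  have hu0 : PowerSeries.constantCoeff u = 1 := by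
    simp [hu]
  have huinv : u * B = 1 := PowerSeries.mul_inv_cancel u (by rw [hu0]; norm_num)
  -- coefficients of u
  have hu_succ : ∀ i : ℕ, PowerSeries.coeff (i + 1) u =
      -((if i = 0 then (1:ℝ) else 0) + PowerSeries.coeff (i + 1) A) := by
    intro i
    rcases Nat.eq_zero_or_pos i with h | h
    · subst h
      simp only [hu, map_sub, PowerSeries.coeff_one, PowerSeries.coeff_X, PowerSeries.coeff_C,
        Nat.succ_ne_zero, if_false, if_pos rfl, zero_add]
      ring
    · have h1 : i + 1 ≠ 1 := by omega
      have h2 : i ≠ 0 := by omega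
      simp only [hu, map_sub, PowerSeries.coeff_one, PowerSeries.coeff_X, PowerSeries.coeff_C,
        Nat.succ_ne_zero, if_false, if_neg h1, if_neg h2, zero_add]
      ring
  have hB0 : PowerSeries.coeff 0 B = 1 := by
    have : PowerSeries.constantCoeff B = 1 := by
      rw [hBdef, PowerSeries.constantCoeff_inv, hu0]; norm_num
    simpa [PowerSeries.coeff_zero_eq_constantCoeff] using this
  -- recursion for the coefficients of B
  have hBrec : ∀ n : ℕ, PowerSeries.coeff (n + 1) B =
      ∑ i ∈ Finset.range (n + 1),
        ((if i = 0 then (1:ℝ) else 0) + PowerSeries.coeff (i + 1) A) *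
          PowerSeries.coeff (n - i) B := by
    intro n
    have h := congrArg (PowerSeries.coeff (n + 1)) huinv
    rw [PowerSeries.coeff_mul, Finset.Nat.sum_antidiagonal_eq_sum_range_succ_mk,
      Finset.sum_range_succ'] at h
    simp only [Nat.sub_zero, PowerSeries.coeff_one, Nat.succ_ne_zero, if_false] at h
    have hu0' : PowerSeries.coeff 0 u = 1 := by
      have : PowerSeries.constantCoeff u = 1 := hu0
      simpa [PowerSeries.coeff_zero_eq_constantCoeff] using this
    rw [hu0', one_mul] at h
    have heq : PowerSeries.coeff (n + 1) B =
        -∑ i ∈ Finset.range (n + 1),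
          PowerSeries.coeff (i + 1) u * PowerSeries.coeff (n + 1 - (i + 1)) B := by
      linarith [h]
    rw [heq, ← Finset.sum_neg_distrib]
    apply Finset.sum_congr rfl
    intro i _
    rw [hu_succ i, Nat.succ_sub_succ]
    ring
  -- nonnegativity of coefficients of B
  have hBpos : ∀ n : ℕ, 0 ≤ PowerSeries.coeff n B := by
    intro n
    induction n using Nat.strong_induction_on with
    | _ n ih =>
      match n with
      | 0 => rw [hB0]; norm_num
      | Nat.succ m =>
        rw [hBrec m]
        apply Finset.sum_nonneg
        intro i hi
        have h1 : 0 ≤ (if i = 0 then (1:ℝ) else 0) + PowerSeries.coeff (i + 1) A := by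
          have := hA (i + 1); split <;> linarith
        have h2 : m - i < m + 1 := by omega
        exact mul_nonneg h1 (ih _ h2)
  -- the coefficients of odeRHS
  have hRHS : ∀ (W : PowerSeries ℝ) (n : ℕ), PowerSeries.coeff n (odeRHS c g A W) =
      c * ∑ p ∈ Finset.HasAntidiagonal.antidiagonal n,
        (PowerSeries.coeff p.1 W + PowerSeries.coeff p.1 g) * PowerSeries.coeff p.2 B := by
    intro W n
    rw [odeRHS]
    rw [show (1 - PowerSeries.X - (A - PowerSeries.C (PowerSeries.constantCoeff A)))⁻¹
        = B from rfl]
    rw [PowerSeries.coeff_C_mul, PowerSeries.coeff_mul]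
    simp [map_add]
  -- the majorization Ω ≤ Y
  have key : ∀ n : ℕ, PowerSeries.coeff n Ω ≤ PowerSeries.coeff n Y := by
    intro n
    induction n using Nat.strong_induction_on with
    | _ n ih =>
      match n with
      | 0 =>
        simp only [PowerSeries.coeff_zero_eq_constantCoeff]
        rw [hY0]
      | Nat.succ m =>
        have h1 : ((m:ℝ) + 1) * PowerSeries.coeff (m + 1) Ω ≤
            PowerSeries.coeff m (odeRHS c g A Ω) := by
          have hm := hmaj m
          have heq : PowerSeries.coeff m (psDeriv Ω) =
              ((m:ℝ) + 1) * PowerSeries.coeff (m + 1) Ω := by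
            simp [psDeriv]
          rw [heq] at hm
          exact (le_abs_self _).trans hm
        have h2 : PowerSeries.coeff m (odeRHS c g A Ω) ≤
            PowerSeries.coeff m (odeRHS c g A Y) := by
          rw [hRHS, hRHS]
          apply mul_le_mul_of_nonneg_left _ (le_of_lt hc)
          apply Finset.sum_le_sum
          intro p hp
          have hple : p.1 ≤ m := Finset.HasAntidiagonal.antidiagonal.fst_le hp
          have hΩY : PowerSeries.coeff p.1 Ω ≤ PowerSeries.coeff p.1 Y :=
            ih p.1 (by omega)
          exact mul_le_mul_of_nonneg_right (by linarith) (hBpos p.2)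
        have h3 : PowerSeries.coeff m (odeRHS c g A Y) =
            ((m:ℝ) + 1) * PowerSeries.coeff (m + 1) Y := by
          rw [← hYode]; simp [psDeriv]
        have hm1 : (0:ℝ) < (m:ℝ) + 1 := by positivity
        have hfin := h1.trans (h2.trans_eq h3)
        exact le_of_mul_le_mul_left hfin hm1
  refine ⟨fun n => by rw [abs_of_nonneg (hΩ n)]; exact key n, ?_⟩
  -- geometric bounds for g and A
  obtain ⟨rg, hrg, hgs⟩ := hgconv
  obtain ⟨rA, hrA, hAs⟩ := hAconv
  obtain ⟨G, hG0, hGb⟩ := geom_bound_of_summable hg hrg hgs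
  obtain ⟨KA, hKA0, hKAb⟩ := geom_bound_of_summable hA hrA hAs
  set t : ℝ := max rA⁻¹ 1 with ht
  have ht1 : (1:ℝ) ≤ t := le_max_right _ _
  set V : ℝ := KA + 1 with hV
  have hV1 : (1:ℝ) ≤ V := by linarith
  -- v bound: for i, δ + A_{i+1} ≤ V t^{i+1}
  have hvb : ∀ i : ℕ, (if i = 0 then (1:ℝ) else 0) + PowerSeries.coeff (i + 1) A ≤
      V * t ^ (i + 1) := by
    intro i
    have h1 : (rA⁻¹) ^ (i+1) ≤ t ^ (i+1) :=
      pow_le_pow_left₀ (by positivity) (le_max_left _ _) _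
    have h2 : (1:ℝ) ≤ t ^ (i+1) := one_le_pow₀ ht1
    have h3 := hKAb (i + 1)
    have h4 : KA * rA⁻¹ ^ (i+1) ≤ KA * t ^ (i+1) := mul_le_mul_of_nonneg_left h1 hKA0
    have h5 : (if i = 0 then (1:ℝ) else 0) ≤ 1 := by split <;> norm_num
    calc (if i = 0 then (1:ℝ) else 0) + PowerSeries.coeff (i + 1) A
        ≤ 1 + KA * t ^ (i+1) := by linarith
      _ ≤ t ^ (i+1) + KA * t ^ (i+1) := by linarith
      _ = V * t ^ (i+1) := by rw [hV]; ring
  set s : ℝ := 2 * V * t with hs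
  have hVt : (1:ℝ) ≤ V * t := by
    calc (1:ℝ) = 1 * 1 := by ring
      _ ≤ V * t := mul_le_mul hV1 ht1 (by norm_num) (by linarith)
  have hs2 : (2:ℝ) ≤ s := by rw [hs]; linarith
  have hs0 : (0:ℝ) ≤ s := by linarith
  -- geometric bound on B
  have hBb : ∀ n : ℕ, PowerSeries.coeff n B ≤ s ^ n := by
    intro n
    induction n using Nat.strong_induction_on with
    | _ n ih =>
      match n with
      | 0 => rw [hB0]; norm_num
      | Nat.succ m =>
        rw [hBrec m]
        have step : ∀ i ∈ Finset.range (m + 1),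
            ((if i = 0 then (1:ℝ) else 0) + PowerSeries.coeff (i + 1) A) *
              PowerSeries.coeff (m - i) B ≤ V * t ^ (m + 1) * (2 * V) ^ (m - i) := by
          intro i hi
          have hi' : i ≤ m := by
            have := Finset.mem_range.mp hi; omega
          have hBle : PowerSeries.coeff (m - i) B ≤ s ^ (m - i) := ih _ (by omega)
          have hBnn := hBpos (m - i)
          have hvnn : (0:ℝ) ≤ (if i = 0 then (1:ℝ) else 0) +
              PowerSeries.coeff (i + 1) A := by
            have := hA (i + 1); split <;> linarith
          have h5 : ((if i = 0 then (1:ℝ) else 0) + PowerSeries.coeff (i + 1) A) *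
              PowerSeries.coeff (m - i) B ≤ (V * t ^ (i + 1)) * s ^ (m - i) :=
            mul_le_mul (hvb i) hBle hBnn (by positivity)
          refine h5.trans (le_of_eq ?_)
          rw [hs, mul_pow]
          have htt : t ^ (i + 1) * t ^ (m - i) = t ^ (m + 1) := by
            rw [← pow_add]; congr 1; omega
          calc V * t ^ (i+1) * ((2*V) ^ (m-i) * t ^ (m-i))
              = V * (t ^ (i+1) * t ^ (m-i)) * (2*V) ^ (m-i) := by ring
            _ = V * t ^ (m+1) * (2*V) ^ (m-i) := by rw [htt]
        calc ∑ i ∈ Finset.range (m + 1),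
              ((if i = 0 then (1:ℝ) else 0) + PowerSeries.coeff (i + 1) A) *
                PowerSeries.coeff (m - i) B
            ≤ ∑ i ∈ Finset.range (m + 1), V * t ^ (m + 1) * (2 * V) ^ (m - i) :=
              Finset.sum_le_sum step
          _ = V * t ^ (m + 1) * ∑ i ∈ Finset.range (m + 1), (2 * V) ^ (m - i) := by
              rw [Finset.mul_sum]
          _ = V * t ^ (m + 1) * ∑ j ∈ Finset.range (m + 1), (2 * V) ^ j := by
              congr 1
              rw [← Finset.sum_range_reflect (fun j => (2*V) ^ j) (m+1)]
              apply Finset.sum_congr rfl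
              intro i hi
              have : m + 1 - 1 - i = m - i := by omega
              rw [this]
          _ ≤ V * t ^ (m + 1) * (2 * (2 * V) ^ m) := by
              apply mul_le_mul_of_nonneg_left (geo_aux (by linarith) m) (by positivity)
          _ = s ^ (m + 1) := by
              have hsp : s ^ (m + 1) = (2 * V) ^ (m + 1) * t ^ (m + 1) := by
                rw [hs, mul_pow]
              rw [hsp, pow_succ (2 * V) m]
              ring
  -- choose the geometric rate for Ω
  set q : ℝ := max (max (2 * s) (4 * c)) rg⁻¹ with hq
  have hq2s : 2 * s ≤ q := le_trans (le_max_left _ _) (le_max_left _ _)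
  have hq4c : 4 * c ≤ q := le_trans (le_max_right _ _) (le_max_left _ _)
  have hqrg : rg⁻¹ ≤ q := le_max_right _ _
  have hq0 : (0:ℝ) < q := lt_of_lt_of_le (by linarith) hq4c
  set M : ℝ := max (PowerSeries.coeff 0 Ω) G + 1 with hM
  have hM0 : (0:ℝ) < M := by
    have h1 : G ≤ max (PowerSeries.coeff 0 Ω) G := le_max_right _ _
    rw [hM]; linarith
  have hMΩ : PowerSeries.coeff 0 Ω ≤ M := by
    have := le_max_left (PowerSeries.coeff 0 Ω) G; rw [hM]; linarith
  have hMG : G ≤ M := by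
    have := le_max_right (PowerSeries.coeff 0 Ω) G; rw [hM]; linarith
  have hgq : ∀ n : ℕ, PowerSeries.coeff n g ≤ G * q ^ n := by
    intro n
    refine (hGb n).trans ?_
    exact mul_le_mul_of_nonneg_left (pow_le_pow_left₀ (by positivity) hqrg n) hG0
  -- geometric bound on Ω
  have hΩb : ∀ n : ℕ, PowerSeries.coeff n Ω ≤ M * q ^ n := by
    intro n
    induction n using Nat.strong_induction_on with
    | _ n ih =>
      match n with
      | 0 => simpa using hMΩ
      | Nat.succ m =>
        have h1 : ((m:ℝ) + 1) * PowerSeries.coeff (m + 1) Ω ≤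
            PowerSeries.coeff m (odeRHS c g A Ω) := by
          have hm := hmaj m
          have heq : PowerSeries.coeff m (psDeriv Ω) =
              ((m:ℝ) + 1) * PowerSeries.coeff (m + 1) Ω := by
            simp [psDeriv]
          rw [heq] at hm
          exact (le_abs_self _).trans hm
        have h1m : (1:ℝ) ≤ (m:ℝ) + 1 := by
          have := Nat.cast_nonneg (α := ℝ) m; linarith
        have hΩm1 : PowerSeries.coeff (m + 1) Ω ≤
            ((m:ℝ) + 1) * PowerSeries.coeff (m + 1) Ω :=
          le_mul_of_one_le_left (hΩ (m + 1)) h1m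
        -- bound the RHS coefficient
        have h2 : PowerSeries.coeff m (odeRHS c g A Ω) ≤ c * (4 * M * q ^ m) := by
          rw [hRHS]
          apply mul_le_mul_of_nonneg_left _ (le_of_lt hc)
          have hterm : ∀ p ∈ Finset.HasAntidiagonal.antidiagonal m,
              (PowerSeries.coeff p.1 Ω + PowerSeries.coeff p.1 g) *
                PowerSeries.coeff p.2 B ≤ 2 * M * (q ^ m * (1/2 : ℝ) ^ p.2) := by
            intro p hp
            have hp1 : p.1 ≤ m := Finset.HasAntidiagonal.antidiagonal.fst_le hp
            have hpsum : p.1 + p.2 = m := Finset.HasAntidiagonal.mem_antidiagonal.mp hp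
            have hΩp : PowerSeries.coeff p.1 Ω ≤ M * q ^ p.1 := ih p.1 (by omega)
            have hgp : PowerSeries.coeff p.1 g ≤ G * q ^ p.1 := hgq p.1
            have hBp : PowerSeries.coeff p.2 B ≤ s ^ p.2 := hBb p.2
            have hBnn := hBpos p.2
            have hqp : (0:ℝ) ≤ q ^ p.1 := by positivity
            have hMGq : G * q ^ p.1 ≤ M * q ^ p.1 := mul_le_mul_of_nonneg_right hMG hqp
            have hsum : PowerSeries.coeff p.1 Ω + PowerSeries.coeff p.1 g ≤
                2 * M * q ^ p.1 := by linarith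
            have hnn : (0:ℝ) ≤ PowerSeries.coeff p.1 Ω + PowerSeries.coeff p.1 g := by
              have := hΩ p.1; have := hg p.1; linarith
            have hstep : (PowerSeries.coeff p.1 Ω + PowerSeries.coeff p.1 g) *
                PowerSeries.coeff p.2 B ≤ (2 * M * q ^ p.1) * s ^ p.2 :=
              mul_le_mul hsum hBp hBnn (by positivity)
            refine hstep.trans ?_
            have hsq : s ^ p.2 ≤ (q / 2) ^ p.2 :=
              pow_le_pow_left₀ hs0 (by linarith) _
            have hqm : q ^ p.1 * q ^ p.2 = q ^ m := by rw [← pow_add, hpsum]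
            have heq2 : (2 * M * q ^ p.1) * (q / 2) ^ p.2 =
                2 * M * (q ^ m * (1/2 : ℝ) ^ p.2) := by
              rw [show q / 2 = q * (1/2 : ℝ) by ring, mul_pow, ← hqm]
              ring
            calc (2 * M * q ^ p.1) * s ^ p.2 ≤ (2 * M * q ^ p.1) * (q / 2) ^ p.2 :=
                  mul_le_mul_of_nonneg_left hsq (by positivity)
              _ = 2 * M * (q ^ m * (1/2 : ℝ) ^ p.2) := heq2
          calc ∑ p ∈ Finset.HasAntidiagonal.antidiagonal m,
                (PowerSeries.coeff p.1 Ω + PowerSeries.coeff p.1 g) *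
                  PowerSeries.coeff p.2 B
              ≤ ∑ p ∈ Finset.HasAntidiagonal.antidiagonal m, 2 * M * (q ^ m * (1/2 : ℝ) ^ p.2) :=
                Finset.sum_le_sum hterm
            _ = 2 * M * q ^ m * ∑ p ∈ Finset.HasAntidiagonal.antidiagonal m, (1/2 : ℝ) ^ p.2 := by
                rw [Finset.mul_sum]; apply Finset.sum_congr rfl; intro p _; ring
            _ ≤ 2 * M * q ^ m * 2 := by
                apply mul_le_mul_of_nonneg_left _ (by positivity)
                rw [Finset.Nat.sum_antidiagonal_eq_sum_range_succ_mk]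
                calc ∑ k ∈ Finset.range (m+1), (1/2 : ℝ) ^ (m - k)
                    = ∑ j ∈ Finset.range (m+1), (1/2 : ℝ) ^ j := by
                      rw [← Finset.sum_range_reflect (fun j => (1/2 : ℝ) ^ j) (m+1)]
                      apply Finset.sum_congr rfl
                      intro i hi
                      have : m + 1 - 1 - i = m - i := by omega
                      rw [this]
                  _ ≤ 2 := sum_geometric_two_le _
            _ = 4 * M * q ^ m := by ring
        have h3 : c * (4 * M * q ^ m) ≤ M * q ^ (m + 1) := by
          have hqm : (0:ℝ) ≤ M * q ^ m := by positivity
          calc c * (4 * M * q ^ m) = (4 * c) * (M * q ^ m) := by ring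
            _ ≤ q * (M * q ^ m) := mul_le_mul_of_nonneg_right hq4c hqm
            _ = M * q ^ (m + 1) := by rw [pow_succ]; ring
        have hfin : ((m:ℝ) + 1) * PowerSeries.coeff (m + 1) Ω ≤ M * q ^ (m + 1) :=
          h1.trans (h2.trans h3)
        exact hΩm1.trans hfin
  -- conclude summability
  refine ⟨(2 * q)⁻¹, by positivity, ?_⟩
  refine Summable.of_nonneg_of_le
    (fun n => mul_nonneg (abs_nonneg _) (pow_nonneg (by positivity : (0:ℝ) ≤ (2*q)⁻¹) n))
    (fun n => ?_) ((summable_geometric_of_lt_one (r := 1/2) (by norm_num) (by norm_num)).mul_left M)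
  · rw [abs_of_nonneg (hΩ n)]
    calc PowerSeries.coeff n Ω * ((2*q)⁻¹) ^ n ≤ M * q ^ n * ((2*q)⁻¹) ^ n :=
          mul_le_mul_of_nonneg_right (hΩb n) (by positivity)
      _ = M * (1/2 : ℝ) ^ n := by
          rw [mul_assoc, ← mul_pow]
          have hq2 : q * (2*q)⁻¹ = 1/2 := by
            rw [← div_eq_mul_inv, div_eq_iff (by positivity : (2*q) ≠ 0)]
            ring
          rw [hq2]
end
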